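/- arXiv:physics/9703007 — 2 statements merged into one kernel-verified Lean document; each statement's English description precedes it below -/
import Mathlib

section
/- If X is a stable real random variable, so that for each n there exist a_n > 0 and b_n ∈ ℝ with X₁ + ⋯ + Xₙ =ᵈ a_n X + b_n for iid copies Xᵢ of X, and X is nondegenerate, then the norming constants satisfy a_n = n^{1/α} for some constant α ∈ (0, 2]. -/
open MeasureTheory Complex

/-- The `n`-th convolution power of a measure on `ℝ`, with `ν^{*0} = δ₀`. -/
noncomputable def convPow (ν : Measure ℝ) : ℕ → Measure ℝ
  | 0 => Measure.dirac 0
  | n + 1 => (convPow ν n).conv ν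

lemma norm_cexp (t x : ℝ) : ‖Complex.exp (t * x * Complex.I)‖ = 1 := by
  rw [show ((t:ℂ) * x * Complex.I) = ((t*x :ℝ):ℂ) * Complex.I by push_cast; ring]
  exact Complex.norm_exp_ofReal_mul_I _

lemma cont_cexp (t : ℝ) : Continuous (fun x : ℝ => Complex.exp (t * x * Complex.I)) :=
  Complex.continuous_exp.comp (by continuity)

lemma integ (μ : Measure ℝ) [IsProbabilityMeasure μ] (t : ℝ) :
    Integrable (fun x : ℝ => Complex.exp (t * x * Complex.I)) μ := by
  apply Integrable.mono' (integrable_const 1) ((cont_cexp t).aestronglyMeasurable)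
  exact Filter.Eventually.of_forall fun x => le_of_eq (norm_cexp t x)

noncomputable def cf (μ : Measure ℝ) (t : ℝ) : ℂ := ∫ x, Complex.exp (t * x * Complex.I) ∂μ

-- conv
lemma cf_conv (μ ν : Measure ℝ) [IsProbabilityMeasure μ] [IsProbabilityMeasure ν] (t : ℝ) :
    cf (μ.conv ν) t = cf μ t * cf ν t := by
  rw [cf, Measure.conv, integral_map (by fun_prop) ((cont_cexp t).aestronglyMeasurable)]
  have : ∀ z : ℝ × ℝ, Complex.exp (t * ↑(z.1 + z.2) * Complex.I)
      = Complex.exp (t * z.1 * Complex.I) * Complex.exp (t * z.2 * Complex.I) := by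
    intro z; rw [← Complex.exp_add]; push_cast; ring_nf
  simp_rw [this]
  rw [integral_prod_mul (μ := μ) (ν := ν) (fun x => Complex.exp (t * x * Complex.I))
    (fun y => Complex.exp (t * y * Complex.I))]; rfl

-- map affine
lemma cf_map (μ : Measure ℝ) [IsProbabilityMeasure μ] (a b t : ℝ) :
    cf (μ.map (fun x => a * x + b)) t = Complex.exp (t * b * Complex.I) * cf μ (a * t) := by
  rw [cf, integral_map (by fun_prop) ((cont_cexp t).aestronglyMeasurable), cf, ← integral_const_mul]
  congr 1; ext x
  rw [← Complex.exp_add]; push_cast; ring_nf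

-- dirac
lemma cf_dirac (t : ℝ) : cf (Measure.dirac 0) t = 1 := by
  rw [cf, integral_dirac]; simp

-- continuity in t
lemma cf_cont (μ : Measure ℝ) [IsProbabilityMeasure μ] : Continuous (cf μ) := by
  have : cf μ = fun t => ∫ x, (fun (t : ℝ) (x:ℝ) => Complex.exp (t * x * Complex.I)) t x ∂μ := rfl
  rw [this]
  apply continuous_of_dominated
  · exact fun t => (cont_cexp t).aestronglyMeasurable
  · exact fun t => Filter.Eventually.of_forall fun x => le_of_eq (norm_cexp t x)
  · exact integrable_const 1
  · exact Filter.Eventually.of_forall fun x =>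
      (Complex.continuous_exp.comp (by continuity : Continuous fun t : ℝ => (t:ℂ) * x * Complex.I))

-- norm ≤ 1
lemma cf_norm_le (μ : Measure ℝ) [IsProbabilityMeasure μ] (t : ℝ) : ‖cf μ t‖ ≤ 1 := by
  calc ‖cf μ t‖ ≤ ∫ x, ‖Complex.exp (t * x * Complex.I)‖ ∂μ := norm_integral_le_integral_norm _
  _ = 1 := by simp_rw [norm_cexp]; simp

lemma cf_zero (μ : Measure ℝ) [IsProbabilityMeasure μ] : cf μ 0 = 1 := by
  rw [cf]; simp


lemma cf_normSq_rep (μ : Measure ℝ) [IsProbabilityMeasure μ] (t : ℝ) :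
    ‖cf μ t‖ ^ 2 = ∫ z : ℝ × ℝ, Real.cos (t * (z.1 - z.2)) ∂(μ.prod μ) := by
  have conj_cf : (starRingEnd ℂ) (cf μ t) = ∫ y : ℝ, Complex.exp ((-(t * y) : ℝ) * Complex.I) ∂μ := by
    rw [cf, ← integral_conj]
    congr 1; ext y
    rw [← Complex.exp_conj]
    congr 1
    simp [Complex.conj_I]
  have key : cf μ t * (starRingEnd ℂ) (cf μ t)
      = ∫ z : ℝ × ℝ, Complex.exp ((t * (z.1 - z.2) : ℝ) * Complex.I) ∂(μ.prod μ) := by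
    rw [conj_cf, cf, ← integral_prod_mul]
    congr 1; ext z
    rw [← Complex.exp_add]
    congr 1
    push_cast; ring
  have h1 : (‖cf μ t‖ ^ 2 : ℝ) = (cf μ t * (starRingEnd ℂ) (cf μ t)).re := by
    rw [Complex.mul_conj, Complex.normSq_eq_norm_sq, Complex.ofReal_re]
  rw [h1, key]
  have hint : Integrable (fun z : ℝ × ℝ => Complex.exp ((t * (z.1 - z.2) : ℝ) * Complex.I)) (μ.prod μ) := by
    apply Integrable.mono' (integrable_const 1)
    · exact (Complex.continuous_exp.comp (by continuity)).aestronglyMeasurable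
    · exact Filter.Eventually.of_forall fun z => le_of_eq (Complex.norm_exp_ofReal_mul_I _)
  have h2 := integral_re (𝕜 := ℂ) hint
  simp only [RCLike.re_to_complex] at h2
  rw [← h2]
  congr 1; ext z
  exact Complex.exp_ofReal_mul_I_re _


-- diagonal lemma
lemma diag_dirac (μ : Measure ℝ) [IsProbabilityMeasure μ]
    (h : (μ.prod μ) {z : ℝ × ℝ | z.1 - z.2 ≠ 0} = 0) : ∃ c : ℝ, μ = Measure.dirac c := by
  have hSm : MeasurableSet {z : ℝ × ℝ | z.1 = z.2} :=
    measurableSet_eq_fun measurable_fst measurable_snd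
  have hS1 : (μ.prod μ) {z : ℝ × ℝ | z.1 = z.2} = 1 := by
    have hc : {z : ℝ × ℝ | z.1 = z.2}ᶜ = {z : ℝ × ℝ | z.1 - z.2 ≠ 0} := by
      ext z; simp [sub_eq_zero]
    rw [← prob_compl_eq_zero_iff hSm, hc, h]
  have hprod : (μ.prod μ) {z : ℝ × ℝ | z.1 = z.2} = ∫⁻ x, μ {x} ∂μ := by
    rw [Measure.prod_apply hSm]
    congr 1; ext x
    congr 1; ext y
    simp [eq_comm]
  have hmeas : Measurable (fun x : ℝ => μ {x}) := by
    have := measurable_measure_prodMk_left (ν := μ) hSm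
    convert this using 2 with x
    congr 1; ext y; simp [eq_comm]
  have hae : ∀ᵐ x ∂μ, μ {x} = 1 := by
    have hle : ∀ x : ℝ, μ {x} ≤ 1 := fun x => prob_le_one
    have h0 : ∫⁻ x, (1 - μ {x}) ∂μ = 0 := by
      rw [lintegral_sub hmeas (by rw [← hprod, hS1]; exact ENNReal.one_ne_top)
        (Filter.Eventually.of_forall hle)]
      rw [← hprod, hS1]; simp
    have := (lintegral_eq_zero_iff (measurable_const.sub hmeas)).1 h0
    filter_upwards [this] with x hx
    have : 1 - μ {x} = 0 := hx
    exact le_antisymm (hle x) (tsub_eq_zero_iff_le.mp this)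
  obtain ⟨c, hc⟩ := hae.exists
  refine ⟨c, Measure.ext fun s hs => ?_⟩
  rw [Measure.dirac_apply' _ hs]
  by_cases hcs : c ∈ s
  · have h1 : (1:ENNReal) ≤ μ s := hc ▸ measure_mono (Set.singleton_subset_iff.2 hcs)
    have := prob_le_one (μ := μ) (s := s)
    simp [Set.indicator_of_mem hcs, le_antisymm this h1]
  · have hsc : s ⊆ {c}ᶜ := fun x hx => by
      simp only [Set.mem_compl_iff, Set.mem_singleton_iff]
      rintro rfl; exact hcs hx
    have h2 : μ {c}ᶜ = 0 := by
      rw [prob_compl_eq_zero_iff (measurableSet_singleton c)]; exact hc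
    have := measure_mono hsc (μ := μ)
    simp [Set.indicator_of_notMem hcs, le_antisymm (this.trans h2.le) zero_le]

lemma cos_integrable (μ : Measure ℝ) [IsProbabilityMeasure μ] (t : ℝ) :
    Integrable (fun z : ℝ × ℝ => Real.cos (t * (z.1 - z.2))) (μ.prod μ) := by
  apply Integrable.mono' (integrable_const 1)
  · exact (Real.continuous_cos.comp (by continuity)).aestronglyMeasurable
  · exact Filter.Eventually.of_forall fun z => by
      rw [Real.norm_eq_abs]; exact Real.abs_cos_le_one _

lemma one_sub_rep (μ : Measure ℝ) [IsProbabilityMeasure μ] (t : ℝ) :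
    1 - ‖cf μ t‖ ^ 2 = ∫ z : ℝ × ℝ, (1 - Real.cos (t * (z.1 - z.2))) ∂(μ.prod μ) := by
  rw [integral_sub (integrable_const 1) (cos_integrable μ t), integral_const,
    ← cf_normSq_rep μ t]
  simp

lemma exists_lt_one (μ : Measure ℝ) [IsProbabilityMeasure μ]
    (hnondeg : ¬ ∃ c : ℝ, μ = Measure.dirac c) : ∃ t : ℝ, ‖cf μ t‖ < 1 := by
  by_contra hcon
  push_neg at hcon
  have hone : ∀ t, ‖cf μ t‖ = 1 := fun t => le_antisymm (cf_norm_le μ t) (hcon t)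
  have hzero : ∀ t : ℝ, ∀ᵐ z ∂(μ.prod μ), Real.cos (t * (z.1 - z.2)) = 1 := by
    intro t
    have h0 : ∫ z : ℝ × ℝ, (1 - Real.cos (t * (z.1 - z.2))) ∂(μ.prod μ) = 0 := by
      rw [← one_sub_rep, hone]; ring
    have := (integral_eq_zero_iff_of_nonneg_ae
      (Filter.Eventually.of_forall fun z => by simpa using Real.cos_le_one _)
      ((integrable_const 1).sub (cos_integrable μ t))).1 h0
    filter_upwards [this] with z hz
    have h1 : 1 - Real.cos (t * (z.1 - z.2)) = 0 := hz
    linarith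
  have hae : ∀ᵐ z ∂(μ.prod μ), ∀ k : ℕ, Real.cos (((k:ℝ)+1)⁻¹ * (z.1 - z.2)) = 1 :=
    ae_all_iff.2 fun k => hzero _
  have hd0 : ∀ᵐ z : ℝ × ℝ ∂(μ.prod μ), z.1 - z.2 = 0 := by
    filter_upwards [hae] with z hz
    by_contra hne
    obtain ⟨k, hk⟩ := exists_nat_gt (|z.1 - z.2| / (2 * Real.pi))
    obtain ⟨m, hm⟩ := (Real.cos_eq_one_iff _).1 (hz k)
    have hk1 : (0:ℝ) < (k:ℝ) + 1 := by positivity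
    have hd : z.1 - z.2 = ((k:ℝ)+1) * ((m:ℝ) * (2*Real.pi)) := by
      rw [hm]; field_simp
    have hm0 : m ≠ 0 := by
      rintro rfl
      simp at hd
      exact hne hd
    have h1 : (1:ℝ) ≤ |(m:ℝ)| := by
      have := Int.one_le_abs hm0
      calc (1:ℝ) = ((1:ℤ):ℝ) := by norm_num
      _ ≤ ((|m|:ℤ):ℝ) := by exact_mod_cast this
      _ = |(m:ℝ)| := by push_cast; ring
    have habs : |z.1 - z.2| = ((k:ℝ)+1) * (|(m:ℝ)| * (2*Real.pi)) := by
      rw [hd, abs_mul, abs_mul, abs_of_pos hk1, abs_of_pos (by positivity : (0:ℝ) < 2*Real.pi)]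
    have hpi := Real.pi_pos
    have hklt : |z.1 - z.2| < 2 * Real.pi * k := by
      rw [div_lt_iff₀ (by positivity)] at hk; linarith
    have hstep : ((k:ℝ)+1) * ((1:ℝ) * (2*Real.pi)) ≤ ((k:ℝ)+1) * (|(m:ℝ)| * (2*Real.pi)) :=
      mul_le_mul_of_nonneg_left (by nlinarith) hk1.le
    nlinarith [hstep]
  rw [ae_iff] at hd0
  exact hnondeg (diag_dirac μ (by convert hd0 using 2))

instance convPow_prob' (μ : Measure ℝ) [IsProbabilityMeasure μ] (n : ℕ) :
    IsProbabilityMeasure (convPow μ n) := by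
  induction n with
  | zero => rw [convPow]; infer_instance
  | succ n ih => rw [convPow]; infer_instance

lemma cf_convPow (μ : Measure ℝ) [IsProbabilityMeasure μ] (n : ℕ) (t : ℝ) :
    cf (convPow μ n) t = (cf μ t) ^ n := by
  induction n with
  | zero => rw [convPow, cf_dirac, pow_zero]
  | succ n ih => rw [convPow, cf_conv _ _ t, ih, pow_succ]


lemma iter_zero (H : ℝ → ℝ) (Hcont : Continuous H) (H0 : H 0 = 0) (Hnn : ∀ t, 0 ≤ H t)
    (r : ℝ) (hr0 : 0 < r) (hr1 : r < 1) (hle : ∀ t, H t ≤ H (r * t)) : ∀ t, H t = 0 := by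
  intro t
  have hiter : ∀ k : ℕ, H t ≤ H (r ^ k * t) := by
    intro k; induction k with
    | zero => simp
    | succ k ih =>
      calc H t ≤ H (r ^ k * t) := ih
      _ ≤ H (r * (r ^ k * t)) := hle _
      _ = H (r ^ (k+1) * t) := by rw [← mul_assoc, ← pow_succ']
  have h1 : Filter.Tendsto (fun k : ℕ => r ^ k * t) Filter.atTop (nhds 0) := by
    simpa using (tendsto_pow_atTop_nhds_zero_of_lt_one hr0.le hr1).mul_const t
  have hlim : Filter.Tendsto (fun k : ℕ => H (r ^ k * t)) Filter.atTop (nhds 0) := by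
    simpa [H0, Function.comp_def] using (Hcont.tendsto 0).comp h1
  exact le_antisymm (ge_of_tendsto hlim (Filter.Eventually.of_forall hiter)) (Hnn t)

lemma pow_eq_of_mult_mono (a : ℕ → ℝ)
    (hpos : ∀ n : ℕ, 1 ≤ n → 0 < a n)
    (hmul : ∀ m n : ℕ, 1 ≤ m → 1 ≤ n → a (m*n) = a m * a n)
    (hmono : ∀ m n : ℕ, 1 ≤ m → m ≤ n → a m ≤ a n)
    (h2 : 1 < a 2) :
    ∀ n : ℕ, 2 ≤ n → Real.log (a n) * Real.log 2 = Real.log (a 2) * Real.log n := by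
  have hpowa : ∀ n : ℕ, 1 ≤ n → ∀ q : ℕ, 1 ≤ q → a (n ^ q) = a n ^ q := by
    intro n hn q hq
    induction q with
    | zero => omega
    | succ q ih =>
      rcases Nat.eq_or_lt_of_le hq with h | h
      · simp [← h]
      · have hq1 : 1 ≤ q := by omega
        rw [pow_succ, hmul _ n (Nat.one_le_pow _ _ (by omega)) hn, ih hq1, pow_succ]
  -- key comparison
  have key : ∀ m n : ℕ, 1 ≤ m → 1 ≤ n → ∀ p q : ℕ, 1 ≤ p → 1 ≤ q →
      m ^ p ≤ n ^ q → a m ^ p ≤ a n ^ q := by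
    intro m n hm hn p q hp hq hle
    rw [← hpowa m hm p hp, ← hpowa n hn q hq]
    exact hmono _ _ (Nat.one_le_pow _ _ (by omega)) hle
  intro n hn
  have hn1 : 1 ≤ n := by omega
  have han : 1 < a n := lt_of_lt_of_le h2 (hmono 2 n (by omega) hn)
  have hL2 : 0 < Real.log (a 2) := Real.log_pos h2
  have hLn : 0 < Real.log (a n) := Real.log_pos han
  have hl2 : 0 < Real.log 2 := Real.log_pos (by norm_num)
  have hln : 0 < Real.log n := Real.log_pos (by exact_mod_cast hn)
  -- generic one-sided estimate
  have side : ∀ m n : ℕ, 2 ≤ m → 2 ≤ n →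
      Real.log (a n) * Real.log m ≤ Real.log (a m) * Real.log n := by
    intro m n hm hn
    by_contra hlt
    push_neg at hlt
    have hLm : 0 < Real.log (a m) := Real.log_pos (lt_of_lt_of_le h2 (hmono 2 m (by omega) hm))
    have hLn : 0 < Real.log (a n) := Real.log_pos (lt_of_lt_of_le h2 (hmono 2 n (by omega) hn))
    have hlm : 0 < Real.log m := Real.log_pos (by exact_mod_cast hm)
    have hln : 0 < Real.log n := Real.log_pos (by exact_mod_cast hn)
    -- log (a m) / log (a n) < log m / log n ; pick rational in between
    have hfrac : Real.log (a m) / Real.log (a n) < Real.log m / Real.log n := by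
      rw [div_lt_div_iff₀ hLn hln]; linarith [mul_comm (Real.log (a m)) (Real.log n)]
    obtain ⟨x, hx1, hx2⟩ := exists_rat_btwn hfrac
    have hxpos : (0:ℚ) < x := by
      have : (0:ℝ) < (x:ℝ) := lt_trans (by positivity) hx1
      exact_mod_cast this
    set p : ℕ := x.num.toNat with hp
    set q : ℕ := x.den with hq
    have hp1 : 1 ≤ p := by
      have := Rat.num_pos.2 hxpos
      omega
    have hq1 : 1 ≤ q := x.den_pos
    have hxval : (x:ℝ) = (p:ℝ) / (q:ℝ) := by
      rw [Rat.cast_def]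
      have hnum : ((p:ℝ)) = (x.num : ℝ) := by
        exact_mod_cast Int.toNat_of_nonneg (le_of_lt (Rat.num_pos.2 hxpos))
      rw [hnum]
    rw [hxval] at hx1 hx2
    have hq0 : (0:ℝ) < (q:ℝ) := by exact_mod_cast hq1
    -- p / q < log m / log n ⇒ p log n < q log m ⇒ n^p ≤ m^q
    have hnm : n ^ p ≤ m ^ q := by
      have h1 : (p:ℝ) * Real.log n < (q:ℝ) * Real.log m := by
        rw [div_lt_div_iff₀ hq0 hln] at hx2; linarith
      have h2 : Real.log ((n:ℝ) ^ p) < Real.log ((m:ℝ) ^ q) := by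
        rw [Real.log_pow, Real.log_pow]; exact_mod_cast h1
      have h3 : ((n:ℝ)) ^ p < ((m:ℝ)) ^ q := by
        have hn0 : (0:ℝ) < (n:ℝ) ^ p := by positivity
        exact (Real.log_lt_log_iff hn0 (by positivity)).1 h2
      exact_mod_cast h3.le
    have hkey := key n m (by omega) (by omega) p q hp1 hq1 hnm
    -- ⇒ p log (a n) ≤ q log (a m) ⇒ log(a m)/log(a n) ≥ p/q, contradicting hx1
    have h4 : (p:ℝ) * Real.log (a n) ≤ (q:ℝ) * Real.log (a m) := by
      have := Real.log_le_log (pow_pos (hpos n (by omega)) p) hkey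
      rw [Real.log_pow, Real.log_pow] at this; exact_mod_cast this
    have h5 : (p:ℝ)/(q:ℝ) ≤ Real.log (a m) / Real.log (a n) := by
      rw [div_le_div_iff₀ hq0 hLn]; linarith
    linarith
  have h6 := side 2 n (le_refl 2) hn
  have h7 := side n 2 hn (le_refl 2)
  norm_num at h6 h7
  linarith
lemma variance_dirac (μ : Measure ℝ) [IsProbabilityMeasure μ] (s γ C : ℝ)
    (hs : s ≠ 0) (hγ0 : 0 < γ) (hγ : γ < 1/2)
    (hbound : ∀ k : ℕ, 1 ≤ k → 1 - ‖cf μ (s / (k:ℝ)^γ)‖^2 ≤ C / k) :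
    ∃ c : ℝ, μ = Measure.dirac c := by
  have hπ := Real.pi_pos
  have hDm : Measurable fun z : ℝ × ℝ => z.1 - z.2 := measurable_fst.sub measurable_snd
  set c0 : ℝ := Real.pi^2 * C / (2 * s^2) with hc0
  have hmain : ∀ k : ℕ, 1 ≤ k →
      ∫⁻ z in {z : ℝ × ℝ | |z.1 - z.2| ≤ Real.pi * (k:ℝ)^γ / |s|},
        ENNReal.ofReal ((z.1 - z.2)^2) ∂(μ.prod μ)
        ≤ ENNReal.ofReal (c0 * (k:ℝ)^(2*γ-1)) := by
    intro k hk
    have hk0 : (0:ℝ) < (k:ℝ) := by exact_mod_cast hk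
    have hkγ : (0:ℝ) < (k:ℝ)^γ := Real.rpow_pos_of_pos hk0 _
    set t : ℝ := s / (k:ℝ)^γ with ht
    have ht0 : t ≠ 0 := div_ne_zero hs (ne_of_gt hkγ)
    have ht2 : (0:ℝ) < t^2 := by positivity
    have habs : |t| = |s| / (k:ℝ)^γ := by rw [ht, abs_div, abs_of_pos hkγ]
    have hs0 : (0:ℝ) < |s| := abs_pos.2 hs
    set S : Set (ℝ × ℝ) := {z : ℝ × ℝ | |z.1 - z.2| ≤ Real.pi * (k:ℝ)^γ / |s|} with hSdef
    have hpt : ∀ z ∈ S, ENNReal.ofReal (2/Real.pi^2 * t^2) * ENNReal.ofReal ((z.1-z.2)^2)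
        ≤ ENNReal.ofReal (1 - Real.cos (t * (z.1 - z.2))) := by
      intro z hz
      rw [← ENNReal.ofReal_mul (by positivity)]
      apply ENNReal.ofReal_le_ofReal
      have hzS : |z.1 - z.2| ≤ Real.pi * (k:ℝ)^γ / |s| := hz
      have habs2 : |t * (z.1 - z.2)| ≤ Real.pi := by
        rw [abs_mul, habs]
        calc |s| / (k:ℝ)^γ * |z.1-z.2| ≤ |s| / (k:ℝ)^γ * (Real.pi * (k:ℝ)^γ / |s|) :=
          mul_le_mul_of_nonneg_left hzS (by positivity)
        _ = Real.pi := by field_simp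
      have hcos := Real.cos_le_one_sub_mul_cos_sq habs2
      calc 2/Real.pi^2 * t^2 * (z.1-z.2)^2 = 2/Real.pi^2 * (t * (z.1-z.2))^2 := by ring
      _ ≤ 1 - Real.cos (t * (z.1-z.2)) := by linarith
    have hSm : MeasurableSet S := measurableSet_le hDm.abs measurable_const
    have hint : Integrable (fun z : ℝ × ℝ => 1 - Real.cos (t * (z.1 - z.2))) (μ.prod μ) :=
      (integrable_const 1).sub (cos_integrable μ t)
    have hlin : ∫⁻ z : ℝ × ℝ, ENNReal.ofReal (1 - Real.cos (t * (z.1 - z.2))) ∂(μ.prod μ)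
        = ENNReal.ofReal (1 - ‖cf μ t‖^2) := by
      rw [← ofReal_integral_eq_lintegral_ofReal hint
        (Filter.Eventually.of_forall fun z => by simpa using Real.cos_le_one _), ← one_sub_rep]
    have hmeasf : Measurable fun z : ℝ×ℝ => ENNReal.ofReal ((z.1-z.2)^2) :=
      (hDm.pow_const 2).ennreal_ofReal
    have hchain : ENNReal.ofReal (2/Real.pi^2 * t^2) *
        ∫⁻ z in S, ENNReal.ofReal ((z.1 - z.2)^2) ∂(μ.prod μ) ≤ ENNReal.ofReal (C / k) := by
      rw [← lintegral_const_mul (ENNReal.ofReal (2/Real.pi^2 * t^2)) hmeasf]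
      calc ∫⁻ z in S, ENNReal.ofReal (2/Real.pi^2*t^2) * ENNReal.ofReal ((z.1-z.2)^2) ∂(μ.prod μ)
          ≤ ∫⁻ z in S, ENNReal.ofReal (1 - Real.cos (t*(z.1-z.2))) ∂(μ.prod μ) :=
            setLIntegral_mono' hSm hpt
      _ ≤ ∫⁻ z : ℝ×ℝ, ENNReal.ofReal (1 - Real.cos (t*(z.1-z.2))) ∂(μ.prod μ) :=
            setLIntegral_le_lintegral _ _
      _ = ENNReal.ofReal (1 - ‖cf μ t‖^2) := hlin
      _ ≤ ENNReal.ofReal (C / k) := ENNReal.ofReal_le_ofReal (hbound k hk)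
    have hB0 : (0:ℝ) < 2/Real.pi^2 * t^2 := by positivity
    have hfinal : ∫⁻ z in S, ENNReal.ofReal ((z.1-z.2)^2) ∂(μ.prod μ)
        ≤ ENNReal.ofReal (C/k) / ENNReal.ofReal (2/Real.pi^2*t^2) := by
      rw [ENNReal.le_div_iff_mul_le
        (Or.inl (by rw [Ne, ENNReal.ofReal_eq_zero]; exact not_le.2 hB0))
        (Or.inl ENNReal.ofReal_ne_top)]
      rw [mul_comm]; exact hchain
    refine hfinal.trans ?_
    rw [← ENNReal.ofReal_div_of_pos hB0]
    apply ENNReal.ofReal_le_ofReal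
    apply le_of_eq
    have hkpow : ((k:ℝ))^(2*γ-1) = ((k:ℝ)^γ)^2 / (k:ℝ) := by
      rw [show (2*γ-1 : ℝ) = γ*2 - 1 by ring, Real.rpow_sub hk0, Real.rpow_one,
        Real.rpow_mul hk0.le, Real.rpow_two]
    rw [hkpow, hc0, ht]
    field_simp
  -- every truncated second moment vanishes
  have hQ : ∀ R : ℝ,
      ∫⁻ z in {z : ℝ×ℝ | |z.1-z.2| ≤ R}, ENNReal.ofReal ((z.1-z.2)^2) ∂(μ.prod μ) = 0 := by
    intro R
    set Q := ∫⁻ z in {z : ℝ×ℝ | |z.1-z.2| ≤ R}, ENNReal.ofReal ((z.1-z.2)^2) ∂(μ.prod μ)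
      with hQdef
    have hs0 : (0:ℝ) < |s| := abs_pos.2 hs
    have htendR : Filter.Tendsto (fun k : ℕ => Real.pi * (k:ℝ)^γ / |s|)
        Filter.atTop Filter.atTop := by
      apply Filter.Tendsto.atTop_div_const hs0
      exact ((tendsto_rpow_atTop hγ0).comp tendsto_natCast_atTop_atTop).const_mul_atTop hπ
    have hev : ∀ᶠ k : ℕ in Filter.atTop, Q ≤ ENNReal.ofReal (c0 * (k:ℝ)^(2*γ-1)) := by
      filter_upwards [htendR.eventually_ge_atTop R, Filter.eventually_ge_atTop 1] with k hkR hk1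
      refine le_trans ?_ (hmain k hk1)
      apply lintegral_mono_set
      intro z hz
      exact le_trans hz hkR
    have htend0 : Filter.Tendsto (fun k : ℕ => ENNReal.ofReal (c0 * (k:ℝ)^(2*γ-1)))
        Filter.atTop (nhds 0) := by
      rw [show (0:ENNReal) = ENNReal.ofReal (c0 * 0) by simp]
      apply ENNReal.tendsto_ofReal
      apply Filter.Tendsto.const_mul
      have h1 := (tendsto_rpow_neg_atTop (by linarith : (0:ℝ) < 1-2*γ)).comp
        tendsto_natCast_atTop_atTop
      simpa [neg_sub, Function.comp_def] using h1
    simpa using ge_of_tendsto htend0 hev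
  have hae : ∀ᵐ z : ℝ×ℝ ∂(μ.prod μ), z.1 - z.2 = 0 := by
    have hmeasf : Measurable fun z : ℝ×ℝ => ENNReal.ofReal ((z.1-z.2)^2) :=
      (hDm.pow_const 2).ennreal_ofReal
    have h1 : ∀ n : ℕ, ∀ᵐ z : ℝ×ℝ ∂(μ.prod μ),
        |z.1 - z.2| ≤ (n:ℝ) → ENNReal.ofReal ((z.1-z.2)^2) = 0 := by
      intro n
      have hSm : MeasurableSet {z : ℝ×ℝ | |z.1-z.2| ≤ (n:ℝ)} :=
        measurableSet_le hDm.abs measurable_const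
      have h0 := hQ (n:ℝ)
      have h2 := (lintegral_eq_zero_iff hmeasf).1 h0
      exact (ae_restrict_iff' hSm).1 h2
    filter_upwards [ae_all_iff.2 h1] with z hz
    obtain ⟨n, hn⟩ := exists_nat_ge |z.1 - z.2|
    have h2 : (z.1 - z.2)^2 ≤ 0 := by simpa [ENNReal.ofReal_eq_zero] using hz n hn
    have h3 : (z.1 - z.2)^2 = 0 := le_antisymm h2 (sq_nonneg _)
    exact pow_eq_zero_iff (by norm_num) |>.1 h3
  apply diag_dirac μ
  rw [ae_iff] at hae
  convert hae using 2

/-- for a nondegenerate stable law, the norming constants satisfy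
`a_n = n^{1/α}` for some `α ∈ (0,2]`. -/
theorem stable_norming_constants
    (μ : Measure ℝ) [IsProbabilityMeasure μ]
    (hnondeg : ¬ ∃ c : ℝ, μ = Measure.dirac c)
    (a b : ℕ → ℝ)
    (hstable : ∀ n : ℕ, 1 ≤ n → 0 < a n ∧
      convPow μ n = μ.map (fun x => a n * x + b n)) :
    ∃ α : ℝ, 0 < α ∧ α ≤ 2 ∧ ∀ n : ℕ, 1 ≤ n → a n = (n : ℝ) ^ ((1 : ℝ) / α) := by
  classical
  set ρ : ℝ → ℝ := fun t => ‖cf μ t‖ with hρdef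
  have hρle : ∀ t, ρ t ≤ 1 := fun t => cf_norm_le μ t
  have hρnn : ∀ t, 0 ≤ ρ t := fun t => norm_nonneg _
  have hρ0 : ρ 0 = 1 := by simp [hρdef, cf_zero]
  have hρcont : Continuous ρ := (cf_cont μ).norm
  have hfe : ∀ n : ℕ, 1 ≤ n → ∀ t : ℝ, ρ (a n * t) = ρ t ^ n := by
    intro n hn t
    obtain ⟨han, heq⟩ := hstable n hn
    have h1 : (cf μ t) ^ n = Complex.exp (t * b n * Complex.I) * cf μ (a n * t) := by
      rw [← cf_convPow, heq, cf_map]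
    have h2 := congrArg norm h1
    rw [norm_pow, norm_mul, norm_cexp, one_mul] at h2
    exact h2.symm
  obtain ⟨t0, ht0⟩ := exists_lt_one μ hnondeg
  have hmid : ∃ t1 : ℝ, 0 < ρ t1 ∧ ρ t1 < 1 := by
    by_contra hcon
    push_neg at hcon
    have hval : ∀ t, ρ t = 0 ∨ ρ t = 1 := by
      intro t
      rcases eq_or_lt_of_le (hρnn t) with h | h
      · exact Or.inl h.symm
      · exact Or.inr (le_antisymm (hρle t) (hcon t h))
    have hUopen : IsOpen (ρ ⁻¹' {1}) := by
      have hU : ρ ⁻¹' {1} = ρ ⁻¹' Set.Ioi (1/2 : ℝ) := by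
        ext t
        simp only [Set.mem_preimage, Set.mem_singleton_iff, Set.mem_Ioi]
        constructor
        · intro h; rw [h]; norm_num
        · intro h
          rcases hval t with h0 | h1
          · rw [h0] at h; norm_num at h
          · exact h1
      rw [hU]
      exact isOpen_Ioi.preimage hρcont
    have hUclosed : IsClosed (ρ ⁻¹' {1}) := isClosed_singleton.preimage hρcont
    rcases isClopen_iff.1 ⟨hUclosed, hUopen⟩ with h | h
    · have h0 : (0:ℝ) ∈ ρ ⁻¹' {1} := by simp [Set.mem_preimage, hρ0]
      rw [h] at h0; exact h0
    · have hmem : t0 ∈ ρ ⁻¹' {1} := by rw [h]; trivial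
      have h1 : ρ t0 = 1 := hmem
      have h2 : ρ t0 < 1 := ht0
      linarith
  obtain ⟨t1, ht1pos, ht1lt⟩ := hmid
  have hagt : ∀ n : ℕ, 2 ≤ n → 1 < a n := by
    intro n hn
    have hn1 : 1 ≤ n := by omega
    have hapos := (hstable n hn1).1
    rcases lt_trichotomy (a n) 1 with hlt | heq | hgt
    · exfalso
      have hiter : ∀ k : ℕ, ρ (a n ^ k * t1) = ρ t1 ^ n ^ k := by
        intro k; induction k with
        | zero => simp
        | succ k ih =>
          have e : a n ^ (k+1) * t1 = a n * (a n ^ k * t1) := by ring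
          rw [e, hfe n hn1, ih, ← pow_mul, pow_succ]
      have hA : Filter.Tendsto (fun k : ℕ => a n ^ k * t1) Filter.atTop (nhds 0) := by
        simpa using (tendsto_pow_atTop_nhds_zero_of_lt_one hapos.le hlt).mul_const t1
      have hB : Filter.Tendsto (fun k : ℕ => ρ (a n ^ k * t1)) Filter.atTop (nhds 1) := by
        simpa [hρ0, Function.comp_def] using (hρcont.tendsto 0).comp hA
      have hC : Filter.Tendsto (fun k : ℕ => ρ (a n ^ k * t1)) Filter.atTop (nhds 0) := by
        apply squeeze_zero (fun k => hρnn _) (fun k => ?_)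
          (tendsto_pow_atTop_nhds_zero_of_lt_one (hρnn t1) ht1lt)
        rw [hiter k]
        exact pow_le_pow_of_le_one (hρnn t1) ht1lt.le
          (Nat.le_of_lt (Nat.lt_pow_self (by omega : 1 < n) : k < n ^ k))
      exact one_ne_zero (tendsto_nhds_unique hB hC)
    · exfalso
      have h1 := hfe n hn1 t1
      rw [heq, one_mul] at h1
      have h2 : ρ t1 ^ n ≤ ρ t1 ^ 2 :=
        pow_le_pow_of_le_one (hρnn t1) (hρle t1) hn
      nlinarith
    · exact hgt
  have ha2 := hagt 2 le_rfl
  have ha2pos := (hstable 2 (by norm_num)).1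
  have hρpos : ∀ t, 0 < ρ t := by
    by_contra hcon
    push_neg at hcon
    obtain ⟨s, hs⟩ := hcon
    have hs0 : ρ s = 0 := le_antisymm hs (hρnn s)
    have hdown : ∀ k : ℕ, ρ (s / a 2 ^ k) = 0 := by
      intro k; induction k with
      | zero => simpa using hs0
      | succ k ih =>
        have h1 : a 2 * (s / a 2 ^ (k+1)) = s / a 2 ^ k := by
          rw [pow_succ]; field_simp
        have h2 := hfe 2 (by norm_num) (s / a 2 ^ (k+1))
        rw [h1, ih] at h2
        exact pow_eq_zero_iff (by norm_num) |>.1 h2.symm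
    have hA : Filter.Tendsto (fun k : ℕ => s / a 2 ^ k) Filter.atTop (nhds 0) := by
      have h1 : Filter.Tendsto (fun k : ℕ => (a 2)⁻¹ ^ k * s) Filter.atTop (nhds 0) := by
        simpa using (tendsto_pow_atTop_nhds_zero_of_lt_one (inv_nonneg.2 ha2pos.le)
          (inv_lt_one_of_one_lt₀ ha2)).mul_const s
      refine h1.congr fun k => ?_
      rw [div_eq_mul_inv, inv_pow]; ring
    have hB := (hρcont.tendsto 0).comp hA
    rw [hρ0] at hB
    have hB' : Filter.Tendsto (fun _ : ℕ => (0:ℝ)) Filter.atTop (nhds 1) := by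
      refine hB.congr fun k => ?_
      simp only [Function.comp]
      rw [hdown k]
    have := tendsto_nhds_unique hB' tendsto_const_nhds
    norm_num at this
  set H : ℝ → ℝ := fun t => - Real.log (ρ t) with hHdef
  have hHcont : Continuous H := (hρcont.log fun t => (hρpos t).ne').neg
  have hH0 : H 0 = 0 := by simp [hHdef, hρ0]
  have hHnn : ∀ t, 0 ≤ H t := fun t => by
    simp only [hHdef, neg_nonneg]
    exact Real.log_nonpos (hρnn t) (hρle t)
  have hHt1 : 0 < H t1 := by
    simp only [hHdef]
    exact neg_pos.2 (Real.log_neg ht1pos ht1lt)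
  have hHfe : ∀ n : ℕ, 1 ≤ n → ∀ t, H (a n * t) = n * H t := by
    intro n hn t
    simp only [hHdef]
    rw [hfe n hn t, Real.log_pow]; ring
  have key : ∀ c c' : ℝ, 0 < c → 0 < c' → (∀ u, H (c * u) ≤ H (c' * u)) → c ≤ c' := by
    intro c c' hc hc' hcc
    by_contra hlt
    push_neg at hlt
    have hr1 : (0:ℝ) < c' / c := by positivity
    have hr2 : c' / c < 1 := (div_lt_one hc).2 hlt
    have hle : ∀ u, H u ≤ H ((c'/c) * u) := by
      intro u
      have h1 := hcc (u / c)
      have e1 : c * (u / c) = u := by field_simp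
      have e2 : c' * (u / c) = (c'/c) * u := by field_simp
      rw [e1, e2] at h1
      exact h1
    have := iter_zero H hHcont hH0 hHnn (c'/c) hr1 hr2 hle t1
    linarith
  have hamono : ∀ m n : ℕ, 1 ≤ m → m ≤ n → a m ≤ a n := by
    intro m n hm hmn
    have hn : 1 ≤ n := le_trans hm hmn
    apply key _ _ (hstable m hm).1 (hstable n hn).1
    intro u
    rw [hHfe m hm, hHfe n hn]
    have h1 : (m:ℝ) ≤ n := by exact_mod_cast hmn
    nlinarith [hHnn u]
  have hamul : ∀ m n : ℕ, 1 ≤ m → 1 ≤ n → a (m * n) = a m * a n := by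
    intro m n hm hn
    have hmn : 1 ≤ m * n := by
      calc 1 = 1 * 1 := by norm_num
      _ ≤ m * n := Nat.mul_le_mul hm hn
    have h1 : ∀ u, H (a (m*n) * u) = H ((a m * a n) * u) := by
      intro u
      rw [hHfe (m*n) hmn, mul_assoc, hHfe m hm, hHfe n hn]
      push_cast; ring
    have hc := (hstable (m*n) hmn).1
    have hc' := mul_pos (hstable m hm).1 (hstable n hn).1
    exact le_antisymm (key _ _ hc hc' fun u => (h1 u).le)
      (key _ _ hc' hc fun u => (h1 u).ge)
  set γ : ℝ := Real.log (a 2) / Real.log 2 with hγdef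
  have hl2 : 0 < Real.log 2 := Real.log_pos (by norm_num)
  have hγpos : 0 < γ := div_pos (Real.log_pos ha2) hl2
  have hlog := pow_eq_of_mult_mono a (fun n hn => (hstable n hn).1) hamul hamono ha2
  have hapow : ∀ n : ℕ, 1 ≤ n → a n = (n:ℝ) ^ γ := by
    intro n hn
    rcases Nat.lt_or_ge n 2 with h | h
    · have hn1 : n = 1 := by omega
      subst hn1
      have h1 : ∀ u, H (a 1 * u) = H (1 * u) := by
        intro u
        rw [hHfe 1 le_rfl, one_mul, Nat.cast_one, one_mul]
      have ha1 : a 1 = 1 := le_antisymm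
        (key _ _ (hstable 1 le_rfl).1 one_pos fun u => (h1 u).le)
        (key _ _ one_pos (hstable 1 le_rfl).1 fun u => (h1 u).ge)
      rw [ha1, Nat.cast_one, Real.one_rpow]
    · have hlogn := hlog n h
      have hnpos : (0:ℝ) < n := by
        have : (1:ℕ) ≤ n := hn
        exact_mod_cast lt_of_lt_of_le zero_lt_one (by exact_mod_cast this)
      have hlnn : Real.log (a n) = γ * Real.log n := by
        rw [hγdef, div_mul_eq_mul_div, eq_div_iff hl2.ne']
        linarith
      have hapos := (hstable n hn).1
      rw [← Real.exp_log hapos, hlnn, Real.rpow_def_of_pos hnpos, mul_comm]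
  have hγhalf : 1/2 ≤ γ := by
    by_contra hcon
    push_neg at hcon
    have ht1ne : t1 ≠ 0 := by
      intro h
      rw [h, hρ0] at ht1lt
      exact lt_irrefl _ ht1lt
    apply hnondeg
    apply variance_dirac μ t1 γ (2 * H t1) ht1ne hγpos hcon
    intro k hk
    have hk0 : (0:ℝ) < k := by exact_mod_cast hk
    have hkγ : (0:ℝ) < (k:ℝ)^γ := Real.rpow_pos_of_pos hk0 _
    have hak : a k = (k:ℝ)^γ := hapow k hk
    have e : a k * (t1 / (k:ℝ)^γ) = t1 := by rw [hak]; field_simp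
    have h1 := hHfe k hk (t1 / (k:ℝ)^γ)
    rw [e] at h1
    -- h1 : H t1 = k * H (t1 / k^γ)
    set u : ℝ := t1 / (k:ℝ)^γ with hu
    have hHu : H u = H t1 / k := by
      rw [h1]; field_simp
    have hρu : ρ u = Real.exp (-(H u)) := by
      simp only [hHdef, neg_neg]
      rw [Real.exp_log (hρpos u)]
    show 1 - ρ u ^ 2 ≤ 2 * H t1 / k
    have h2 : Real.exp (-(H u)) ^ 2 = Real.exp ((2:ℕ) * -(H u)) := by
      rw [Real.exp_nat_mul]
    have h3 := Real.add_one_le_exp ((2:ℕ) * -(H u))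
    rw [hρu, h2, mul_div_assoc]
    have h4 : ((2:ℕ):ℝ) * -(H u) = -(2 * (H t1 / k)) := by
      rw [hHu]; push_cast; ring
    rw [h4] at h3 ⊢
    linarith
  refine ⟨1/γ, by positivity, ?_, ?_⟩
  · rw [div_le_iff₀ hγpos]
    linarith
  · intro n hn
    rw [one_div_one_div]
    exact hapow n hn
end

section
/- For v > 0, the integral ∫₀^∞ (e^{-vx} - 1 + vx·1_{x≤1}) x^{-2} dx converges and equals v·ln v + C·v for an explicit constant C (involving the Euler–Mascheroni constant γ: C = γ - 1); i.e. the α = 1 one-sided stable case produces a v ln v singularity. -/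
open MeasureTheory

namespace AlphaOneAux

open Set Filter Real MeasureTheory
open scoped Topology

lemma integral_log_mul_exp_neg :
    ∫ t in Ioi (0:ℝ), Real.log t * Real.exp (-t) = -Real.eulerMascheroniConstant := by
  have h1 : HasDerivAt Complex.GammaIntegral
      (∫ t : ℝ in Ioi 0, (t:ℂ) ^ ((1:ℂ) - 1) * (Real.log t * Real.exp (-t))) 1 :=
    Complex.hasDerivAt_GammaIntegral (by norm_num)
  have h2 : HasDerivAt Complex.GammaIntegral (-(Real.eulerMascheroniConstant:ℂ)) 1 := by
    refine Complex.hasDerivAt_Gamma_one.congr_of_eventuallyEq ?_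
    filter_upwards [IsOpen.mem_nhds (isOpen_lt continuous_const Complex.continuous_re)
      (by norm_num : (0:ℝ) < (1:ℂ).re)] with s hs
    exact (Complex.Gamma_eq_integral hs).symm
  have h3 := h1.unique h2
  rw [show ((1:ℂ) - 1) = 0 by ring] at h3
  simp only [Complex.cpow_zero, one_mul, ← Complex.ofReal_mul] at h3
  rw [show ∫ t in Ioi (0:ℝ), ((Real.log t * Real.exp (-t) : ℝ) : ℂ)
      = ((∫ t in Ioi (0:ℝ), Real.log t * Real.exp (-t) : ℝ) : ℂ) from integral_ofReal] at h3
  exact_mod_cast h3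

lemma exp_lower {t : ℝ} : 0 ≤ Real.exp (-t) - 1 + t := by
  nlinarith [Real.add_one_le_exp (-t)]

lemma exp_quad {t : ℝ} (ht : 0 ≤ t) : Real.exp (-t) - 1 + t ≤ t ^ 2 / 2 := by
  have hd : ∀ x : ℝ, HasDerivAt (fun t : ℝ => t ^ 2 / 2 - (Real.exp (-t) - 1 + t))
      (x - (-Real.exp (-x) + 1)) x := by
    intro x
    have h1 : HasDerivAt (fun t : ℝ => Real.exp (-t)) (-Real.exp (-x)) x := by
      simpa using ((hasDerivAt_id x).neg.exp)
    have h2 : HasDerivAt (fun t : ℝ => t ^ 2 / 2) x x := by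
      simpa using ((hasDerivAt_pow 2 x).div_const 2)
    exact h2.sub ((h1.sub_const 1).add (hasDerivAt_id x))
  have hmono : MonotoneOn (fun t : ℝ => t ^ 2 / 2 - (Real.exp (-t) - 1 + t)) (Ici 0) := by
    apply monotoneOn_of_deriv_nonneg (convex_Ici 0)
    · fun_prop
    · intro x _
      exact (hd x).differentiableAt.differentiableWithinAt
    · intro x hx
      rw [interior_Ici] at hx
      rw [(hd x).deriv]
      nlinarith [Real.add_one_le_exp (-x)]
  have := hmono self_mem_Ici ht ht
  simp only [ne_eq, neg_zero, Real.exp_zero] at this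
  nlinarith [this]

lemma rpow_neg_two' {x : ℝ} (hx : 0 < x) : x ^ (-2 : ℝ) = (x ^ 2)⁻¹ := by
  rw [Real.rpow_neg hx.le]
  norm_num [Real.rpow_natCast]

lemma meas_aux (v : ℝ) :
    Measurable (fun x : ℝ => (Real.exp (-(v * x)) - 1 + v * x) * x ^ (-2 : ℝ)) := by
  fun_prop

lemma integrableOn_piece1 (v : ℝ) (hv : 0 < v) :
    IntegrableOn (fun x : ℝ => (Real.exp (-(v * x)) - 1 + v * x) * x ^ (-2 : ℝ)) (Ioc 0 1) := by
  apply Integrable.mono' (integrable_const (v ^ 2 / 2)) ((meas_aux v).aestronglyMeasurable)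
  filter_upwards [ae_restrict_mem measurableSet_Ioc] with x hx
  have hx0 : 0 < x := hx.1
  have hvx : 0 ≤ v * x := by positivity
  have h1 := exp_lower (t := v * x)
  have h2 := exp_quad hvx
  have hp : (0:ℝ) < x ^ (-2:ℝ) := Real.rpow_pos_of_pos hx0 _
  rw [Real.norm_eq_abs, abs_of_nonneg (by nlinarith)]
  rw [rpow_neg_two' hx0] at hp ⊢
  rw [mul_inv_le_iff₀ (by positivity)]
  nlinarith

lemma integrableOn_piece2 (v : ℝ) (hv : 0 < v) :
    IntegrableOn (fun x : ℝ => (Real.exp (-(v * x)) - 1) * x ^ (-2 : ℝ)) (Ioi 1) := by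
  apply Integrable.mono' (integrableOn_Ioi_rpow_of_lt (a := (-2:ℝ)) (by norm_num) one_pos)
  · exact Measurable.aestronglyMeasurable (by fun_prop)
  filter_upwards [ae_restrict_mem measurableSet_Ioi] with x hx
  have hx0 : (0:ℝ) < x := lt_trans one_pos hx
  have he : Real.exp (-(v*x)) ≤ 1 := Real.exp_le_one_iff.mpr (by nlinarith)
  have hp : (0:ℝ) < x ^ (-2:ℝ) := Real.rpow_pos_of_pos hx0 _
  rw [Real.norm_eq_abs, abs_mul, abs_of_pos hp]
  have : |Real.exp (-(v*x)) - 1| ≤ 1 := by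
    rw [abs_le]; constructor <;> nlinarith [Real.exp_pos (-(v*x))]
  nlinarith

lemma abs_log_le {x : ℝ} (hx0 : 0 < x) (hx1 : x ≤ 1) : |Real.log x| ≤ 2 * x ^ (-(1:ℝ)/2) := by
  have hy : 0 < x ^ ((1:ℝ)/2) := Real.rpow_pos_of_pos hx0 _
  have hlog : Real.log (x ^ ((1:ℝ)/2)) = (1/2) * Real.log x := Real.log_rpow hx0 _
  have hb : Real.log ((x ^ ((1:ℝ)/2))⁻¹) ≤ (x ^ ((1:ℝ)/2))⁻¹ - 1 :=
    Real.log_le_sub_one_of_pos (by positivity)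
  rw [Real.log_inv, hlog] at hb
  have hneg : Real.log x ≤ 0 := Real.log_nonpos hx0.le hx1
  rw [abs_of_nonpos hneg]
  have hxi : x ^ (-(1:ℝ)/2) = (x ^ ((1:ℝ)/2))⁻¹ := by
    rw [← Real.rpow_neg hx0.le]; norm_num
  rw [hxi]
  nlinarith [inv_pos.mpr hy]

lemma integrableOn_logexp1 (v : ℝ) (hv : 0 < v) :
    IntegrableOn (fun x : ℝ => Real.log x * Real.exp (-(v * x))) (Ioc 0 1) := by
  have hg : IntegrableOn (fun x : ℝ => 2 * x ^ (-(1:ℝ)/2)) (Ioc 0 1) := by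
    apply Integrable.const_mul
    have := (intervalIntegral.intervalIntegrable_rpow' (a := 0) (b := 1)
      (r := -(1:ℝ)/2) (by norm_num))
    rwa [intervalIntegrable_iff_integrableOn_Ioc_of_le zero_le_one] at this
  apply Integrable.mono' hg ((Real.measurable_log.mul (by fun_prop)).aestronglyMeasurable)
  filter_upwards [ae_restrict_mem measurableSet_Ioc] with x hx
  have h1 := abs_log_le hx.1 hx.2
  have he : Real.exp (-(v*x)) ≤ 1 := Real.exp_le_one_iff.mpr (by nlinarith [hx.1])
  rw [Real.norm_eq_abs, Pi.mul_apply, abs_mul, abs_of_pos (Real.exp_pos _)]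
  nlinarith [abs_nonneg (Real.log x), Real.exp_pos (-(v*x))]

lemma integrableOn_logexp2 (v : ℝ) (hv : 0 < v) :
    IntegrableOn (fun x : ℝ => Real.log x * Real.exp (-(v * x))) (Ioi 1) := by
  have hg : IntegrableOn (fun x : ℝ => (2/v) * Real.exp (-(v/2) * x)) (Ioi 1) :=
    (exp_neg_integrableOn_Ioi 1 (by positivity)).const_mul _
  apply Integrable.mono' hg ((Real.measurable_log.mul (by fun_prop)).aestronglyMeasurable)
  filter_upwards [ae_restrict_mem measurableSet_Ioi] with x hx
  have hx1 : (1:ℝ) ≤ x := hx.le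
  have hlog : |Real.log x| ≤ x := by
    rw [abs_of_nonneg (Real.log_nonneg hx1)]
    nlinarith [Real.log_le_sub_one_of_pos (lt_of_lt_of_le one_pos hx1)]
  rw [Real.norm_eq_abs, Pi.mul_apply, abs_mul, abs_of_pos (Real.exp_pos _)]
  have hxe : x ≤ (2/v) * Real.exp ((v/2) * x) := by
    have := Real.add_one_le_exp ((v/2) * x)
    have h2 : (v/2) * x ≤ Real.exp ((v/2)*x) := by nlinarith
    calc x = (2/v) * ((v/2) * x) := by field_simp
    _ ≤ (2/v) * Real.exp ((v/2)*x) := by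
        apply mul_le_mul_of_nonneg_left h2 (by positivity)
  calc |Real.log x| * Real.exp (-(v*x)) ≤ x * Real.exp (-(v*x)) := by
        nlinarith [Real.exp_pos (-(v*x))]
  _ ≤ (2/v) * Real.exp ((v/2)*x) * Real.exp (-(v*x)) := by
        nlinarith [Real.exp_pos (-(v*x))]
  _ = (2/v) * Real.exp (-(v/2) * x) := by
        rw [mul_assoc, ← Real.exp_add]; ring_nf

lemma hexp_deriv (v x : ℝ) :
    HasDerivAt (fun x : ℝ => Real.exp (-(v*x))) (Real.exp (-(v*x)) * -v) x := by
  have : HasDerivAt (fun x : ℝ => -(v * x)) (-v) x := by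
    have h := ((hasDerivAt_id x).const_mul v).neg
    rw [mul_one] at h
    exact h
  simpa using this.exp

lemma hasDerivAt_K1 (v : ℝ) {x : ℝ} (hx : 0 < x) :
    HasDerivAt (fun x : ℝ => -(Real.exp (-(v*x)) - 1 + v*x) / x
        + v * (1 - Real.exp (-(v*x))) * Real.log x)
      ((Real.exp (-(v*x)) - 1 + v*x) * x ^ (-2:ℝ) + v^2 * (Real.log x * Real.exp (-(v*x)))) x := by
  have hv1 : HasDerivAt (fun x : ℝ => v * x) v x := by
    simpa using (hasDerivAt_id x).const_mul v
  have h1 : HasDerivAt (fun x : ℝ => -(Real.exp (-(v*x)) - 1 + v*x) / x)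
      ((-(Real.exp (-(v*x)) * -v + v) * x - -(Real.exp (-(v*x)) - 1 + v*x) * 1) / x^2) x :=
    ((((hexp_deriv v x).sub_const 1).add hv1).neg).div (hasDerivAt_id x) hx.ne'
  have h2 : HasDerivAt (fun x : ℝ => v * (1 - Real.exp (-(v*x))) * Real.log x)
      ((v * -(Real.exp (-(v*x)) * -v)) * Real.log x
        + v * (1 - Real.exp (-(v*x))) * x⁻¹) x :=
    (((hexp_deriv v x).const_sub 1).const_mul v).mul (Real.hasDerivAt_log hx.ne')
  refine (h1.add h2).congr_deriv ?_
  rw [rpow_neg_two' hx]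
  field_simp
  ring

lemma hasDerivAt_K2 (v : ℝ) {x : ℝ} (hx : 0 < x) :
    HasDerivAt (fun x : ℝ => -(Real.exp (-(v*x)) - 1) / x - v * Real.exp (-(v*x)) * Real.log x)
      ((Real.exp (-(v*x)) - 1) * x ^ (-2:ℝ) + v^2 * (Real.log x * Real.exp (-(v*x)))) x := by
  have h1 : HasDerivAt (fun x : ℝ => -(Real.exp (-(v*x)) - 1) / x)
      ((-(Real.exp (-(v*x)) * -v) * x - -(Real.exp (-(v*x)) - 1) * 1) / x^2) x :=
    (((hexp_deriv v x).sub_const 1).neg).div (hasDerivAt_id x) hx.ne'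
  have h2 : HasDerivAt (fun x : ℝ => v * Real.exp (-(v*x)) * Real.log x)
      ((v * (Real.exp (-(v*x)) * -v)) * Real.log x + v * Real.exp (-(v*x)) * x⁻¹) x :=
    ((hexp_deriv v x).const_mul v).mul (Real.hasDerivAt_log hx.ne')
  refine (h1.sub h2).congr_deriv ?_
  rw [rpow_neg_two' hx]
  field_simp
  ring

lemma slope_lim (c : ℝ) (g : ℝ → ℝ) (hg : HasDerivAt g c 0) (hg0 : g 0 = 0) :
    Tendsto (fun x => g x / x) (𝓝[>] (0:ℝ)) (𝓝 c) := by
  have := (hasDerivAt_iff_tendsto_slope.mp hg).mono_left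
    (nhdsWithin_mono _ (fun x (hx : x ∈ Ioi (0:ℝ)) => ne_of_gt hx))
  refine this.congr (fun x => ?_)
  simp [slope_def_field, hg0]

lemma K1_lim0 (v : ℝ) :
    Tendsto (fun x : ℝ => -(Real.exp (-(v*x)) - 1 + v*x) / x
        + v * (1 - Real.exp (-(v*x))) * Real.log x) (𝓝[>] (0:ℝ)) (𝓝 0) := by
  have hA : Tendsto (fun x : ℝ => (Real.exp (-(v*x)) - 1 + v*x) / x) (𝓝[>] (0:ℝ)) (𝓝 0) := by
    apply slope_lim _ _ _ (by simp)
    have hv1 : HasDerivAt (fun x : ℝ => v * x) v 0 := by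
      simpa using (hasDerivAt_id (0:ℝ)).const_mul v
    have := ((hexp_deriv v 0).sub_const 1).add hv1
    exact this.congr_deriv (by simp)
  have hB : Tendsto (fun x : ℝ => (1 - Real.exp (-(v*x))) / x) (𝓝[>] (0:ℝ)) (𝓝 v) := by
    apply slope_lim _ _ _ (by simp)
    have := (hexp_deriv v 0).const_sub 1
    simpa using this
  have hC : Tendsto (fun x : ℝ => Real.log x * x ^ (1:ℝ)) (𝓝[>] (0:ℝ)) (𝓝 0) :=
    tendsto_log_mul_rpow_nhdsGT_zero one_pos
  have hC' : Tendsto (fun x : ℝ => Real.log x * x) (𝓝[>] (0:ℝ)) (𝓝 0) := by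
    refine hC.congr' ?_
    filter_upwards [self_mem_nhdsWithin] with x (hx : 0 < x)
    rw [Real.rpow_one]
  have hfinal : Tendsto (fun x : ℝ => -((Real.exp (-(v*x)) - 1 + v*x) / x)
      + (v * ((1 - Real.exp (-(v*x))) / x)) * (Real.log x * x)) (𝓝[>] (0:ℝ))
      (𝓝 (-0 + (v * v) * 0)) := (hA.neg).add ((hB.const_mul v).mul hC')
  rw [show (-0 + (v*v)*(0:ℝ)) = 0 by ring] at hfinal
  refine hfinal.congr' ?_
  filter_upwards [self_mem_nhdsWithin] with x (hx : 0 < x)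
  field_simp

lemma K2_limtop (v : ℝ) (hv : 0 < v) :
    Tendsto (fun x : ℝ => -(Real.exp (-(v*x)) - 1) / x - v * Real.exp (-(v*x)) * Real.log x)
      atTop (𝓝 0) := by
  have hvx : Tendsto (fun x : ℝ => v * x) atTop atTop :=
    Tendsto.const_mul_atTop hv tendsto_id
  have he : Tendsto (fun x : ℝ => Real.exp (-(v*x))) atTop (𝓝 0) :=
    Real.tendsto_exp_atBot.comp (tendsto_neg_atTop_atBot.comp hvx)
  have h1 : Tendsto (fun x : ℝ => -(Real.exp (-(v*x)) - 1) * x⁻¹) atTop (𝓝 0) := by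
    have := ((he.sub_const 1).neg).mul tendsto_inv_atTop_zero
    simpa using this
  have hxe : Tendsto (fun x : ℝ => x * Real.exp (-(v*x))) atTop (𝓝 0) := by
    have h := ((tendsto_pow_mul_exp_neg_atTop_nhds_zero 1).comp hvx).const_mul (1/v)
    rw [mul_zero] at h
    refine h.congr (fun x => ?_)
    simp only [Function.comp_apply, pow_one]
    field_simp
  have h2 : Tendsto (fun x : ℝ => v * Real.exp (-(v*x)) * Real.log x) atTop (𝓝 0) := by
    apply squeeze_zero' (t₀ := atTop)
    · filter_upwards [eventually_ge_atTop (1:ℝ)] with x hx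
      have := Real.log_nonneg hx
      positivity
    · filter_upwards [eventually_ge_atTop (1:ℝ)] with x hx
      have hlx : Real.log x ≤ x := by
        nlinarith [Real.log_le_sub_one_of_pos (lt_of_lt_of_le one_pos hx)]
      calc v * Real.exp (-(v*x)) * Real.log x ≤ v * Real.exp (-(v*x)) * x := by
            exact mul_le_mul_of_nonneg_left hlx (by positivity)
        _ = v * (x * Real.exp (-(v*x))) := by ring
    · simpa using hxe.const_mul v
  have := h1.sub h2
  rw [sub_zero] at this
  refine this.congr (fun x => ?_)
  rw [div_eq_mul_inv]

lemma exp_int (v : ℝ) (hv : 0 < v) : ∫ x in Ioi (0:ℝ), Real.exp (-(v*x)) = v⁻¹ := by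
  have h := integral_comp_mul_left_Ioi (fun t => Real.exp (-t)) 0 hv
  simp only [mul_zero, integral_exp_neg_Ioi, neg_zero, Real.exp_zero, smul_eq_mul, mul_one] at h
  exact h

lemma integrableOn_exp (v : ℝ) (hv : 0 < v) :
    IntegrableOn (fun x : ℝ => Real.exp (-(v*x))) (Ioi (0:ℝ)) := by
  have := exp_neg_integrableOn_Ioi 0 hv
  simpa [neg_mul] using this

lemma integrableOn_logexp (v : ℝ) (hv : 0 < v) :
    IntegrableOn (fun x : ℝ => Real.log x * Real.exp (-(v * x))) (Ioi (0:ℝ)) := by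
  rw [← Ioc_union_Ioi_eq_Ioi (zero_le_one : (0:ℝ) ≤ 1)]
  exact (integrableOn_logexp1 v hv).union (integrableOn_logexp2 v hv)

lemma log_int (v : ℝ) (hv : 0 < v) :
    ∫ x in Ioi (0:ℝ), Real.log x * Real.exp (-(v*x))
      = (-Real.eulerMascheroniConstant - Real.log v) / v := by
  have h := integral_comp_mul_left_Ioi (fun t => Real.log t * Real.exp (-t)) 0 hv
  simp only [mul_zero, smul_eq_mul] at h
  rw [integral_log_mul_exp_neg] at h
  have hsplit : ∫ x in Ioi (0:ℝ), Real.log (v * x) * Real.exp (-(v*x))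
      = ∫ x in Ioi (0:ℝ),
          (Real.log v * Real.exp (-(v*x)) + Real.log x * Real.exp (-(v*x))) := by
    apply setIntegral_congr_fun measurableSet_Ioi
    intro x hx
    simp only [Real.log_mul hv.ne' (ne_of_gt hx)]
    ring
  rw [hsplit] at h
  rw [integral_add ((integrableOn_exp v hv).const_mul _) (integrableOn_logexp v hv),
    MeasureTheory.integral_const_mul, exp_int v hv] at h
  have hv' : v ≠ 0 := hv.ne'
  field_simp at h ⊢
  linarith

lemma int_Ioc (v : ℝ) (hv : 0 < v) :
    ∫ x in Ioc (0:ℝ) 1, ((Real.exp (-(v*x)) - 1 + v*x) * x ^ (-2:ℝ)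
        + v^2 * (Real.log x * Real.exp (-(v*x)))) = 1 - v - Real.exp (-v) := by
  have hint : IntervalIntegrable (fun x : ℝ => (Real.exp (-(v*x)) - 1 + v*x) * x ^ (-2:ℝ)
      + v^2 * (Real.log x * Real.exp (-(v*x)))) volume 0 1 := by
    rw [intervalIntegrable_iff_integrableOn_Ioc_of_le zero_le_one]
    exact (integrableOn_piece1 v hv).add ((integrableOn_logexp1 v hv).const_mul _)
  have hb : Tendsto (fun x : ℝ => -(Real.exp (-(v*x)) - 1 + v*x) / x
      + v * (1 - Real.exp (-(v*x))) * Real.log x) (𝓝[<] (1:ℝ))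
      (𝓝 (1 - v - Real.exp (-v))) := by
    have hc := (hasDerivAt_K1 v (x := 1) one_pos).continuousAt.continuousWithinAt
      (s := Iio (1:ℝ))
    have hval : (1:ℝ) - v - Real.exp (-v)
        = -(Real.exp (-(v*1)) - 1 + v*1) / 1 + v * (1 - Real.exp (-(v*1))) * Real.log 1 := by
      simp [Real.log_one]
      ring
    rw [hval]
    exact hc
  have := intervalIntegral.integral_eq_sub_of_hasDerivAt_of_tendsto zero_lt_one
    (fun x hx => hasDerivAt_K1 v hx.1) hint (K1_lim0 v) hb
  rw [intervalIntegral.integral_of_le zero_le_one] at this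
  rw [this]
  ring

lemma int_Ioi (v : ℝ) (hv : 0 < v) :
    ∫ x in Ioi (1:ℝ), ((Real.exp (-(v*x)) - 1) * x ^ (-2:ℝ)
        + v^2 * (Real.log x * Real.exp (-(v*x)))) = Real.exp (-v) - 1 := by
  have hint : IntegrableOn (fun x : ℝ => (Real.exp (-(v*x)) - 1) * x ^ (-2:ℝ)
      + v^2 * (Real.log x * Real.exp (-(v*x)))) (Ioi (1:ℝ)) :=
    (integrableOn_piece2 v hv).add ((integrableOn_logexp2 v hv).const_mul _)
  have hc : ContinuousWithinAt (fun x : ℝ => -(Real.exp (-(v*x)) - 1) / x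
      - v * Real.exp (-(v*x)) * Real.log x) (Ici (1:ℝ)) 1 :=
    (hasDerivAt_K2 v (x := 1) one_pos).continuousAt.continuousWithinAt
  have := integral_Ioi_of_hasDerivAt_of_tendsto hc
    (fun x hx => hasDerivAt_K2 v (lt_trans one_pos hx)) hint (K2_limtop v hv)
  rw [this]
  simp [Real.log_one]

end AlphaOneAux

/-- the `α = 1` one-sided stable case: for `v > 0`,
`∫₀^∞ (e^{-vx} - 1 + vx·1_{x≤1}) x^{-2} dx = v ln v + (γ - 1) v`,
where `γ` is the Euler–Mascheroni constant. -/
theorem integral_alpha_one_v_log_v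
    (v : ℝ) (hv : 0 < v) :
    IntegrableOn
      (fun x : ℝ => (Real.exp (-(v * x)) - 1 + (if x ≤ 1 then v * x else 0)) * x ^ (-2 : ℝ))
      (Set.Ioi 0) ∧
    (∫ x in Set.Ioi (0 : ℝ),
        (Real.exp (-(v * x)) - 1 + (if x ≤ 1 then v * x else 0)) * x ^ (-2 : ℝ)) =
      v * Real.log v + (Real.eulerMascheroniConstant - 1) * v := by
  open AlphaOneAux Set in
  have hcong1 : ∀ x ∈ Ioc (0:ℝ) 1,
      (Real.exp (-(v * x)) - 1 + (if x ≤ 1 then v * x else 0)) * x ^ (-2 : ℝ)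
        = (Real.exp (-(v * x)) - 1 + v * x) * x ^ (-2 : ℝ) := by
    intro x hx
    rw [if_pos hx.2]
  have hcong2 : ∀ x ∈ Ioi (1:ℝ),
      (Real.exp (-(v * x)) - 1 + (if x ≤ 1 then v * x else 0)) * x ^ (-2 : ℝ)
        = (Real.exp (-(v * x)) - 1) * x ^ (-2 : ℝ) := by
    intro x hx
    rw [if_neg (not_le.mpr hx)]
    ring_nf
  have hi1 : IntegrableOn
      (fun x : ℝ => (Real.exp (-(v * x)) - 1 + (if x ≤ 1 then v * x else 0)) * x ^ (-2 : ℝ))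
      (Ioc (0:ℝ) 1) :=
    (integrableOn_piece1 v hv).congr_fun (fun x hx => (hcong1 x hx).symm) measurableSet_Ioc
  have hi2 : IntegrableOn
      (fun x : ℝ => (Real.exp (-(v * x)) - 1 + (if x ≤ 1 then v * x else 0)) * x ^ (-2 : ℝ))
      (Ioi (1:ℝ)) :=
    (integrableOn_piece2 v hv).congr_fun (fun x hx => (hcong2 x hx).symm) measurableSet_Ioi
  have hunion : Ioc (0:ℝ) 1 ∪ Ioi 1 = Ioi 0 := Ioc_union_Ioi_eq_Ioi zero_le_one
  have hint : IntegrableOn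
      (fun x : ℝ => (Real.exp (-(v * x)) - 1 + (if x ≤ 1 then v * x else 0)) * x ^ (-2 : ℝ))
      (Ioi (0:ℝ)) := by
    rw [← hunion]; exact hi1.union hi2
  refine ⟨hint, ?_⟩
  have hsplit : (∫ x in Ioi (0 : ℝ),
      (Real.exp (-(v * x)) - 1 + (if x ≤ 1 then v * x else 0)) * x ^ (-2 : ℝ))
      = (∫ x in Ioc (0:ℝ) 1,
          (Real.exp (-(v * x)) - 1 + (if x ≤ 1 then v * x else 0)) * x ^ (-2 : ℝ))
        + ∫ x in Ioi (1:ℝ),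
          (Real.exp (-(v * x)) - 1 + (if x ≤ 1 then v * x else 0)) * x ^ (-2 : ℝ) := by
    rw [← hunion, setIntegral_union (Ioc_disjoint_Ioi le_rfl) measurableSet_Ioi hi1 hi2]
  rw [hsplit,
    setIntegral_congr_fun measurableSet_Ioc hcong1,
    setIntegral_congr_fun measurableSet_Ioi hcong2]
  -- decompose the two pieces using the FTC identities
  have e1 : (∫ x in Ioc (0:ℝ) 1, (Real.exp (-(v*x)) - 1 + v*x) * x ^ (-2:ℝ))
      = (1 - v - Real.exp (-v))
        - v^2 * ∫ x in Ioc (0:ℝ) 1, Real.log x * Real.exp (-(v*x)) := by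
    have := int_Ioc v hv
    rw [integral_add (integrableOn_piece1 v hv)
      ((integrableOn_logexp1 v hv).const_mul _), MeasureTheory.integral_const_mul] at this
    linarith
  have e2 : (∫ x in Ioi (1:ℝ), (Real.exp (-(v*x)) - 1) * x ^ (-2:ℝ))
      = (Real.exp (-v) - 1)
        - v^2 * ∫ x in Ioi (1:ℝ), Real.log x * Real.exp (-(v*x)) := by
    have := int_Ioi v hv
    rw [integral_add (integrableOn_piece2 v hv)
      ((integrableOn_logexp2 v hv).const_mul _), MeasureTheory.integral_const_mul] at this
    linarith
  have esum : (∫ x in Ioc (0:ℝ) 1, Real.log x * Real.exp (-(v*x)))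
      + (∫ x in Ioi (1:ℝ), Real.log x * Real.exp (-(v*x)))
      = (-Real.eulerMascheroniConstant - Real.log v) / v := by
    rw [← setIntegral_union (Ioc_disjoint_Ioi le_rfl) measurableSet_Ioi
      (integrableOn_logexp1 v hv) (integrableOn_logexp2 v hv), hunion]
    exact log_int v hv
  rw [e1, e2]
  have hv' : v ≠ 0 := hv.ne'
  have : v^2 * ((∫ x in Ioc (0:ℝ) 1, Real.log x * Real.exp (-(v*x)))
      + (∫ x in Ioi (1:ℝ), Real.log x * Real.exp (-(v*x))))
      = v^2 * ((-Real.eulerMascheroniConstant - Real.log v) / v) := by rw [esum]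
  rw [mul_add] at this
  field_simp at this
  nlinarith [this]
end
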